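/- Let G be a lattice-ordered group with identity 0 and let u ∈ G with u > 0. If the interval [0, u] = {x ∈ G : 0 ≤ x ≤ u} has a least element different from 0, then [0, u] is totally ordered. -/

import Mathlib

/-- In an ℓ-group (written multiplicatively, identity `1` playing the role of
`0`), if the interval `[1,u]`, `u > 1`, has a least element different from `1`,
then `[1,u]` is totally ordered. -/
theorem stmt_17 {G : Type} [Lattice G] [Group G]
    [CovariantClass G G (· * ·) (· ≤ ·)]
    [CovariantClass G G (Function.swap (· * ·)) (· ≤ ·)]
    (u : G) (hu : 1 < u) (e : G) (he : 1 ≤ e ∧ e ≤ u) (hne : e ≠ 1)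
    (hleast : ∀ x : G, 1 ≤ x → x ≤ u → x ≠ 1 → e ≤ x) :
    ∀ x y : G, 1 ≤ x → x ≤ u → 1 ≤ y → y ≤ u → x ≤ y ∨ y ≤ x := by
  intro x y hx hxu hy hyu
  by_contra h
  push_neg at h
  obtain ⟨hxy, hyx⟩ := h
  set m := x ⊓ y with hm
  have hm1 : 1 ≤ m := le_inf hx hy
  have hminv : m⁻¹ ≤ 1 := inv_le_one'.2 hm1
  have ha1 : 1 ≤ x * m⁻¹ := by
    have := mul_le_mul_left (inf_le_left : m ≤ x) m⁻¹
    rwa [mul_inv_cancel] at this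
  have hb1 : 1 ≤ y * m⁻¹ := by
    have := mul_le_mul_left (inf_le_right : m ≤ y) m⁻¹
    rwa [mul_inv_cancel] at this
  have hau : x * m⁻¹ ≤ u := le_trans (by simpa using mul_le_mul_right hminv x) hxu
  have hbu : y * m⁻¹ ≤ u := le_trans (by simpa using mul_le_mul_right hminv y) hyu
  have hane : x * m⁻¹ ≠ 1 := by
    intro hh
    have : x = m := by
      rw [← div_eq_mul_inv] at hh
      exact div_eq_one.mp hh
    exact hxy (this ▸ inf_le_right)
  have hbne : y * m⁻¹ ≠ 1 := by
    intro hh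
    have : y = m := by
      rw [← div_eq_mul_inv] at hh
      exact div_eq_one.mp hh
    exact hyx (this ▸ inf_le_left)
  have hea := hleast _ ha1 hau hane
  have heb := hleast _ hb1 hbu hbne
  have hinf : (x * m⁻¹) ⊓ (y * m⁻¹) = 1 := by
    rw [← inf_mul]
    simp [hm]
  have : e ≤ 1 := hinf ▸ le_inf hea heb
  exact hne (le_antisymm this he.1)
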